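/- arXiv:2206.06227 — 2 statements merged into one kernel-verified Lean document; each statement's English description precedes it below -/
import Mathlib

section
/- Let (Ω,F,ℙ) be a probability space and d ≥ 1. For each n ∈ ℕ let Z_n and Z̄_n be ℝ^d-valued random variables with laws q_n and q̄_n respectively, let p_n be a probability measure on ℝ^d, let B_n ⊆ ℝ^d be Borel sets, and let D_n, δ_n ≥ 0 be such that for every n: (1) almost surely, if Z̄_k ∉ B_k for all 0 ≤ k ≤ n−1, then Z_n = Z̄_n; (2) χ²(q̄_n‖p_n) ≤ D_n²; (3) p_n(B_n) ≤ δ_n. Then for every n, TV(q_n, q̄_n) ≤ Σ_{k=0}^{n−1} (D_k²+1)^{1/2} δ_k^{1/2}, and TV(p_n, q_n) ≤ D_n + Σ_{k=0}^{n−1} (D_k²+1)^{1/2} δ_k^{1/2}. -/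
open MeasureTheory ProbabilityTheory Real
open scoped ENNReal NNReal RealInnerProductSpace

noncomputable section

/-- `ℝ^d` as a Euclidean space. -/
abbrev Euc (d : ℕ) := EuclideanSpace ℝ (Fin d)

variable {d : ℕ}

/-- The measure on `ℝ^d` with Lebesgue density `p`. -/
def densMeasure (p : Euc d → ℝ) : Measure (Euc d) :=
  volume.withDensity fun x => ENNReal.ofReal (p x)

/-- `p` is a probability density on `ℝ^d`. -/
def IsDensity (p : Euc d → ℝ) : Prop :=
  (∀ x, 0 ≤ p x) ∧ (∫ x, p x = 1)

/-- χ²-divergence between measures: `∫ (dq/dp)² dp − 1` if `q ≪ p`, and `+∞` otherwise. -/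
def chiSq (q p : Measure (Euc d)) : ℝ≥0∞ :=
  @ite _ (q ≪ p) (Classical.propDecidable _) ((∫⁻ x, (q.rnDeriv p x) ^ 2 ∂p) - 1) ⊤

/-- Total variation distance between measures. -/
def TVdist (μ ν : Measure (Euc d)) : ℝ :=
  ⨆ A : { A : Set (Euc d) // MeasurableSet A }, |(μ A.1).toReal - (ν A.1).toReal|

/-- KL divergence between densities. -/
def KLdiv (q p : Euc d → ℝ) : ℝ :=
  ∫ x, q x * Real.log (q x / p x)

/-- The score function `∇ ln p` of a density `p`. -/
def score (p : Euc d → ℝ) : Euc d → Euc d :=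
  fun x => gradient (fun y => Real.log (p y)) x

/-- `ln p` is `C¹` and `L`-smooth, i.e. `∇ ln p` is `L`-Lipschitz. -/
def LSmooth (p : Euc d → ℝ) (L : ℝ) : Prop :=
  ContDiff ℝ 1 (fun x => Real.log (p x)) ∧ LipschitzWith (Real.toNNReal L) (score p)

/-- `p` satisfies a log-Sobolev inequality with constant `C`. -/
def LogSobolevIneq (p : Euc d → ℝ) (C : ℝ) : Prop :=
  ∀ q : Euc d → ℝ, IsDensity q →
    KLdiv q p ≤ C / 2 * ∫ x, ‖gradient (fun y => Real.log (q y / p y)) x‖ ^ 2 * q x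

/-- The standard Gaussian `N(0, I_d)` on `ℝ^d`. -/
def stdGaussian (d : ℕ) : Measure (Euc d) :=
  (Measure.pi fun _ : Fin d => gaussianReal 0 1).map
    (fun x => (EuclideanSpace.equiv (Fin d) ℝ).symm x)

/-- One step of Langevin Monte Carlo with score estimate `s` and step size `h`:
the law of `X + h·s(X) + √(2h)·ξ`, `X ∼ q`, `ξ ∼ N(0, I_d)` independent. -/
def lmcStep (s : Euc d → Euc d) (h : ℝ) (q : Measure (Euc d)) : Measure (Euc d) :=
  (q.prod (stdGaussian d)).map fun z => z.1 + h • s z.1 + Real.sqrt (2 * h) • z.2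

/-- The `n`-th iterate of LMC with score estimate `s`, step size `h`, started from `q0`. -/
def lmcIter (s : Euc d → Euc d) (h : ℝ) (q0 : Measure (Euc d)) : ℕ → Measure (Euc d)
  | 0 => q0
  | n + 1 => lmcStep s h (lmcIter s h q0 n)

/-- The density of `N(0, σ² I_d)` on `ℝ^d`. -/
def gaussDensity (σ2 : ℝ) : Euc d → ℝ :=
  fun x => (2 * Real.pi * σ2) ^ (-(d : ℝ) / 2) * Real.exp (-‖x‖ ^ 2 / (2 * σ2))

/-- Convolution of a density `p` with the Gaussian density `φ_{σ²}` (equal to `p` if `σ² = 0`). -/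
def conv (p : Euc d → ℝ) (σ2 : ℝ) : Euc d → ℝ :=
  if σ2 = 0 then p else fun x => ∫ y, p y * gaussDensity σ2 (x - y)

/-- The density of `αX` where `X` has density `p` (for `α > 0`). -/
def scaleDensity (α : ℝ) (p : Euc d → ℝ) : Euc d → ℝ :=
  fun x => α ^ (-(d : ℝ)) * p (α⁻¹ • x)

/-- The density of the DDPM forward marginal (with `g ≡ 1`) at time `t`:
the law of `e^{−t/2}X + √(1−e^{−t})·ξ`, `X ∼ p`, `ξ ∼ N(0,I_d)` independent. -/
def ddpmDensity (p : Euc d → ℝ) (t : ℝ) : Euc d → ℝ :=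
  conv (scaleDensity (Real.exp (-t / 2)) p) (1 - Real.exp (-t))

/-- The DDPM predictor chain with score estimates `s(·,t)`, horizon `T` and step size `h`:
`q₀ = N(0,(1−e^{−T})I_d)`, and `q_{(k+1)h}` is the law of
`(1+h/2)Z + h·s(Z, T−kh) + √h·ξ`, `Z ∼ q_{kh}`, `ξ ∼ N(0,I_d)` independent. -/
def ddpmChain (s : ℝ → Euc d → Euc d) (T h : ℝ) : ℕ → Measure (Euc d)
  | 0 => (stdGaussian d).map fun x => Real.sqrt (1 - Real.exp (-T)) • x
  | k + 1 =>
      ((ddpmChain s T h k).prod (stdGaussian d)).map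
        fun z => (1 + h / 2) • z.1 + h • s (T - k * h) z.1 + Real.sqrt h • z.2

/-- The SMLD predictor chain with score estimates `s(·,t)`, horizon `T` and step size `h`:
`q₀ = N(0, T·I_d)`, and `q_{(k+1)h}` is the law of
`Z + h·s(Z, T−kh) + √h·ξ`, `Z ∼ q_{kh}`, `ξ ∼ N(0,I_d)` independent. -/
def smldChain (s : ℝ → Euc d → Euc d) (T h : ℝ) : ℕ → Measure (Euc d)
  | 0 => (stdGaussian d).map fun x => Real.sqrt T • x
  | k + 1 =>
      ((smldChain s T h k).prod (stdGaussian d)).map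
        fun z => z.1 + h • s (T - k * h) z.1 + Real.sqrt h • z.2


section FrameworkAux

set_option linter.unusedSectionVars false

lemma key_id_nnreal (x : ℝ≥0) : (x - 1) ^ 2 + (1 - x) ^ 2 + 2 * x = x ^ 2 + 1 := by
  rcases le_total x 1 with h | h
  · have h1 : x - 1 = 0 := tsub_eq_zero_of_le h
    apply NNReal.coe_injective
    push_cast [h1, NNReal.coe_sub h]
    ring
  · have h1 : 1 - x = 0 := tsub_eq_zero_of_le h
    apply NNReal.coe_injective
    push_cast [h1, NNReal.coe_sub h]
    ring

lemma key_id (x : ℝ≥0∞) : (x - 1) ^ 2 + (1 - x) ^ 2 + 2 * x = x ^ 2 + 1 := by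
  rcases eq_or_ne x ⊤ with rfl | hx
  · simp [ENNReal.top_pow]
  · lift x to ℝ≥0 using hx
    exact_mod_cast key_id_nnreal x

lemma conj22 : Real.HolderConjugate 2 2 := ⟨by norm_num, by norm_num, by norm_num⟩

lemma holder_L2 {α : Type*} [MeasurableSpace α] (μ : Measure α) {f g : α → ℝ≥0∞}
    (hf : Measurable f) (hg : Measurable g) :
    ∫⁻ x, f x * g x ∂μ ≤ (∫⁻ x, f x ^ 2 ∂μ) ^ (1/2 : ℝ) * (∫⁻ x, g x ^ 2 ∂μ) ^ (1/2 : ℝ) := by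
  have := ENNReal.lintegral_mul_le_Lp_mul_Lq μ conj22 hf.aemeasurable hg.aemeasurable
  simpa [ENNReal.rpow_two] using this

lemma holder_one {α : Type*} [MeasurableSpace α] (μ : Measure α) [IsProbabilityMeasure μ]
    {h : α → ℝ≥0∞} (hm : Measurable h) :
    ∫⁻ x, h x ∂μ ≤ (∫⁻ x, h x ^ 2 ∂μ) ^ (1/2 : ℝ) := by
  have := holder_L2 μ hm (measurable_const (a := (1 : ℝ≥0∞)))
  simpa using this

section Chi
variable {q p : Measure (Euc d)} [IsProbabilityMeasure q] [IsProbabilityMeasure p] {D : ℝ}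

lemma ac_of_chi (h : chiSq q p ≤ ENNReal.ofReal (D ^ 2)) : q ≪ p := by
  by_contra hac
  rw [chiSq, if_neg hac, top_le_iff] at h
  exact ENNReal.ofReal_ne_top h

lemma sq_int_le (hac : q ≪ p) (h : chiSq q p ≤ ENNReal.ofReal (D ^ 2)) :
    ∫⁻ x, (q.rnDeriv p x) ^ 2 ∂p ≤ ENNReal.ofReal (D ^ 2) + 1 := by
  rw [chiSq, if_pos hac] at h
  exact tsub_le_iff_right.mp h

lemma pos_neg_sq_le (hac : q ≪ p) (h : chiSq q p ≤ ENNReal.ofReal (D ^ 2)) :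
    (∫⁻ x, (q.rnDeriv p x - 1) ^ 2 ∂p) + (∫⁻ x, (1 - q.rnDeriv p x) ^ 2 ∂p)
      ≤ ENNReal.ofReal (D ^ 2) := by
  set f := q.rnDeriv p with hf
  have hfm : Measurable f := Measure.measurable_rnDeriv q p
  have hid : (∫⁻ x, (f x - 1) ^ 2 ∂p) + (∫⁻ x, (1 - f x) ^ 2 ∂p) + 2 * ∫⁻ x, f x ∂p
      = (∫⁻ x, (f x) ^ 2 ∂p) + 1 := by
    have h1 : ∫⁻ x, ((f x - 1) ^ 2 + (1 - f x) ^ 2 + 2 * f x) ∂p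
        = (∫⁻ x, (f x - 1) ^ 2 ∂p) + (∫⁻ x, (1 - f x) ^ 2 ∂p) + 2 * ∫⁻ x, f x ∂p := by
      rw [lintegral_add_right _ (by fun_prop), lintegral_add_right _ (by fun_prop),
        lintegral_const_mul _ hfm]
    have h2 : ∫⁻ x, ((f x - 1) ^ 2 + (1 - f x) ^ 2 + 2 * f x) ∂p
        = (∫⁻ x, (f x) ^ 2 ∂p) + 1 := by
      simp_rw [key_id]
      rw [lintegral_add_right _ (by fun_prop)]
      simp
    rw [← h1, h2]
  have hint : ∫⁻ x, f x ∂p = 1 := by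
    have : q.HaveLebesgueDecomposition p := Measure.haveLebesgueDecomposition_of_sigmaFinite q p
    rw [hf, Measure.lintegral_rnDeriv hac]; simp
  rw [hint, mul_one] at hid
  have hsq := sq_int_le hac h
  have h3 : (∫⁻ x, (f x - 1) ^ 2 ∂p) + (∫⁻ x, (1 - f x) ^ 2 ∂p) + 2
      ≤ ENNReal.ofReal (D ^ 2) + 2 := by
    rw [hid]
    calc (∫⁻ x, (f x) ^ 2 ∂p) + 1 ≤ (ENNReal.ofReal (D ^ 2) + 1) + 1 := by gcongr
    _ = ENNReal.ofReal (D ^ 2) + 2 := by ring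
  exact (ENNReal.add_le_add_iff_right (by norm_num)).mp h3

lemma chi_tv (hD : 0 ≤ D) (h : chiSq q p ≤ ENNReal.ofReal (D ^ 2)) {A : Set (Euc d)}
    (hA : MeasurableSet A) :
    q A ≤ p A + ENNReal.ofReal D ∧ p A ≤ q A + ENNReal.ofReal D := by
  have hac := ac_of_chi h
  have : q.HaveLebesgueDecomposition p := Measure.haveLebesgueDecomposition_of_sigmaFinite q p
  set f := q.rnDeriv p with hf
  have hfm : Measurable f := Measure.measurable_rnDeriv q p
  have hsq := pos_neg_sq_le hac h
  have hofD : ∀ g : Euc d → ℝ≥0∞, Measurable g →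
      (∫⁻ x, g x ^ 2 ∂p ≤ ENNReal.ofReal (D ^ 2)) → ∫⁻ x in A, g x ∂p ≤ ENNReal.ofReal D := by
    intro g hgm hg
    calc ∫⁻ x in A, g x ∂p ≤ ∫⁻ x, g x ∂p := setLIntegral_le_lintegral _ _
    _ ≤ (∫⁻ x, g x ^ 2 ∂p) ^ (1/2 : ℝ) := holder_one p hgm
    _ ≤ (ENNReal.ofReal (D ^ 2)) ^ (1/2 : ℝ) := by gcongr
    _ = ENNReal.ofReal D := by
        rw [ENNReal.ofReal_rpow_of_nonneg (sq_nonneg D) (by norm_num),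
          ← Real.sqrt_eq_rpow, Real.sqrt_sq hD]
  constructor
  · have hqA : q A = ∫⁻ x in A, f x ∂p := (Measure.setLIntegral_rnDeriv hac A).symm
    rw [hqA]
    calc ∫⁻ x in A, f x ∂p ≤ ∫⁻ x in A, (1 + (f x - 1)) ∂p := by
          refine lintegral_mono fun x => le_add_tsub
    _ = (∫⁻ x in A, (1:ℝ≥0∞) ∂p) + ∫⁻ x in A, (f x - 1) ∂p := by
          rw [lintegral_add_left measurable_const]
    _ ≤ p A + ENNReal.ofReal D := by
          rw [setLIntegral_one]
          gcongr
          exact hofD _ (by fun_prop) (le_self_add.trans hsq)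
  · have hqA : q A = ∫⁻ x in A, f x ∂p := (Measure.setLIntegral_rnDeriv hac A).symm
    have hpA : p A = ∫⁻ x in A, (1:ℝ≥0∞) ∂p := (setLIntegral_one A).symm
    rw [hqA, hpA]
    calc ∫⁻ x in A, (1:ℝ≥0∞) ∂p ≤ ∫⁻ x in A, (f x + (1 - f x)) ∂p := by
          refine lintegral_mono fun x => le_add_tsub
    _ = (∫⁻ x in A, f x ∂p) + ∫⁻ x in A, (1 - f x) ∂p := by
          rw [lintegral_add_right _ (by fun_prop)]
    _ ≤ (∫⁻ x in A, f x ∂p) + ENNReal.ofReal D := by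
          gcongr
          exact hofD _ (by fun_prop) (le_add_self.trans hsq)

lemma chi_badset (hD : 0 ≤ D) (h : chiSq q p ≤ ENNReal.ofReal (D ^ 2)) {C : Set (Euc d)}
    (hC : MeasurableSet C) {δ : ℝ} (hδ : 0 ≤ δ) (hbad : p C ≤ ENNReal.ofReal δ) :
    q C ≤ ENNReal.ofReal (Real.sqrt (D ^ 2 + 1) * Real.sqrt δ) := by
  have hac := ac_of_chi h
  have : q.HaveLebesgueDecomposition p := Measure.haveLebesgueDecomposition_of_sigmaFinite q p
  set f := q.rnDeriv p with hf
  have hfm : Measurable f := Measure.measurable_rnDeriv q p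
  have hqC : q C = ∫⁻ x, f x * C.indicator 1 x ∂p := by
    rw [← Measure.setLIntegral_rnDeriv hac C, ← lintegral_indicator hC f]
    congr 1; funext x
    by_cases hx : x ∈ C <;> simp [hx]
  rw [hqC]
  calc ∫⁻ x, f x * C.indicator 1 x ∂p
      ≤ (∫⁻ x, f x ^ 2 ∂p) ^ (1/2 : ℝ) * (∫⁻ x, (C.indicator 1 x) ^ 2 ∂p) ^ (1/2 : ℝ) :=
        holder_L2 p hfm (measurable_one.indicator hC)
  _ ≤ (ENNReal.ofReal (D ^ 2) + 1) ^ (1/2 : ℝ) * (ENNReal.ofReal δ) ^ (1/2 : ℝ) := by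
        gcongr
        · exact sq_int_le hac h
        · calc ∫⁻ x, (C.indicator 1 x) ^ 2 ∂p = ∫⁻ x, C.indicator 1 x ∂p := by
                congr 1; funext x; by_cases hx : x ∈ C <;> simp [hx]
          _ = p C := lintegral_indicator_one hC
          _ ≤ ENNReal.ofReal δ := hbad
  _ = ENNReal.ofReal (Real.sqrt (D ^ 2 + 1) * Real.sqrt δ) := by
        rw [show ENNReal.ofReal (D ^ 2) + 1 = ENNReal.ofReal (D ^ 2 + 1) by
            rw [ENNReal.ofReal_add (sq_nonneg D) zero_le_one, ENNReal.ofReal_one],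
          ENNReal.ofReal_rpow_of_nonneg (by positivity) (by norm_num),
          ENNReal.ofReal_rpow_of_nonneg hδ (by norm_num),
          ← Real.sqrt_eq_rpow, ← Real.sqrt_eq_rpow,
          ← ENNReal.ofReal_mul (Real.sqrt_nonneg _)]

end Chi

lemma abs_toReal_sub_le {a b : ℝ≥0∞} (ha : a ≠ ⊤) (hb : b ≠ ⊤) {c : ℝ} (hc : 0 ≤ c)
    (h1 : a ≤ b + ENNReal.ofReal c) (h2 : b ≤ a + ENNReal.ofReal c) :
    |a.toReal - b.toReal| ≤ c := by
  rw [abs_sub_le_iff]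
  constructor
  · have := ENNReal.toReal_mono (by finiteness) h1
    rw [ENNReal.toReal_add hb ENNReal.ofReal_ne_top, ENNReal.toReal_ofReal hc] at this
    linarith
  · have := ENNReal.toReal_mono (by finiteness) h2
    rw [ENNReal.toReal_add ha ENNReal.ofReal_ne_top, ENNReal.toReal_ofReal hc] at this
    linarith

lemma coupling_bound {Ω : Type*} [MeasureSpace Ω] [IsProbabilityMeasure (ℙ : Measure Ω)]
    {α : Type*} [MeasurableSpace α] {X Y : Ω → α} {E : Set Ω}
    (hcpl : ∀ᵐ ω ∂ℙ, ω ∉ E → X ω = Y ω) (A : Set α) :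
    ℙ (X ⁻¹' A) ≤ ℙ (Y ⁻¹' A) + ℙ E := by
  have hsub : (X ⁻¹' A : Set Ω) ≤ᵐ[ℙ] (Y ⁻¹' A ∪ E : Set Ω) := by
    filter_upwards [hcpl] with ω hω hXA
    by_cases hE : ω ∈ E
    · exact Or.inr hE
    · exact Or.inl (by rw [Set.mem_preimage, ← hω hE]; exact hXA)
  exact (measure_mono_ae hsub).trans (measure_union_le _ _)

end FrameworkAux

/-- Framework theorem: converting an `L²` guarantee to TV bounds via a bad set. -/
theorem framework_bad_set
    {d : ℕ} (hd : 1 ≤ d)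
    {Ω : Type*} [MeasureSpace Ω] [IsProbabilityMeasure (ℙ : Measure Ω)]
    (Z Zbar : ℕ → Ω → Euc d)
    (hZ : ∀ n, Measurable (Z n)) (hZbar : ∀ n, Measurable (Zbar n))
    (p : ℕ → Measure (Euc d)) (hp : ∀ n, IsProbabilityMeasure (p n))
    (B : ℕ → Set (Euc d)) (hB : ∀ n, MeasurableSet (B n))
    (D δ : ℕ → ℝ) (hD : ∀ n, 0 ≤ D n) (hδ : ∀ n, 0 ≤ δ n)
    (hcouple : ∀ n, ∀ᵐ ω ∂ℙ, (∀ k < n, Zbar k ω ∉ B k) → Z n ω = Zbar n ω)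
    (hchi : ∀ n, chiSq (Measure.map (Zbar n) ℙ) (p n) ≤ ENNReal.ofReal (D n ^ 2))
    (hbad : ∀ n, p n (B n) ≤ ENNReal.ofReal (δ n)) :
    ∀ n : ℕ,
      TVdist (Measure.map (Z n) ℙ) (Measure.map (Zbar n) ℙ) ≤
        ∑ k ∈ Finset.range n, Real.sqrt (D k ^ 2 + 1) * Real.sqrt (δ k) ∧
      TVdist (p n) (Measure.map (Z n) ℙ) ≤
        D n + ∑ k ∈ Finset.range n, Real.sqrt (D k ^ 2 + 1) * Real.sqrt (δ k) := by
  intro n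
  set S := ∑ k ∈ Finset.range n, Real.sqrt (D k ^ 2 + 1) * Real.sqrt (δ k) with hSdef
  have hS : 0 ≤ S :=
    Finset.sum_nonneg fun k _ => mul_nonneg (Real.sqrt_nonneg _) (Real.sqrt_nonneg _)
  haveI hqb : ∀ m, IsProbabilityMeasure (Measure.map (Zbar m) ℙ) :=
    fun m => Measure.isProbabilityMeasure_map (hZbar m).aemeasurable
  haveI hqz : ∀ m, IsProbabilityMeasure (Measure.map (Z m) ℙ) :=
    fun m => Measure.isProbabilityMeasure_map (hZ m).aemeasurable
  haveI := hqb n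
  haveI := hqz n
  haveI := hp n
  set E : Set Ω := ⋃ k ∈ Finset.range n, Zbar k ⁻¹' B k with hEdef
  have hEle : ℙ E ≤ ENNReal.ofReal S := by
    calc ℙ E ≤ ∑ k ∈ Finset.range n, ℙ (Zbar k ⁻¹' B k) := measure_biUnion_finset_le _ _
    _ ≤ ∑ k ∈ Finset.range n, ENNReal.ofReal (Real.sqrt (D k ^ 2 + 1) * Real.sqrt (δ k)) := by
        refine Finset.sum_le_sum fun k _ => ?_
        have hmap : ℙ (Zbar k ⁻¹' B k) = (Measure.map (Zbar k) ℙ) (B k) :=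
          (Measure.map_apply (hZbar k) (hB k)).symm
        rw [hmap]
        haveI := hqb k; haveI := hp k
        exact chi_badset (hD k) (hchi k) (hB k) (hδ k) (hbad k)
    _ = ENNReal.ofReal S := by
        rw [hSdef, ENNReal.ofReal_sum_of_nonneg]
        intro k _
        positivity
  have hcpl : ∀ᵐ ω ∂ℙ, ω ∉ E → Z n ω = Zbar n ω := by
    filter_upwards [hcouple n] with ω hω hE'
    refine hω fun k hk hB' => hE' ?_
    exact Set.mem_biUnion (Finset.mem_range.mpr hk) hB'
  have hcpl' : ∀ᵐ ω ∂ℙ, ω ∉ E → Zbar n ω = Z n ω := by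
    filter_upwards [hcpl] with ω h h'
    exact (h h').symm
  have habs : ∀ (A : Set (Euc d)), MeasurableSet A →
      Measure.map (Z n) ℙ A ≤ Measure.map (Zbar n) ℙ A + ENNReal.ofReal S ∧
      Measure.map (Zbar n) ℙ A ≤ Measure.map (Z n) ℙ A + ENNReal.ofReal S := by
    intro A hA
    rw [Measure.map_apply (hZ n) hA, Measure.map_apply (hZbar n) hA]
    constructor
    · calc ℙ (Z n ⁻¹' A) ≤ ℙ (Zbar n ⁻¹' A) + ℙ E := coupling_bound hcpl A
      _ ≤ ℙ (Zbar n ⁻¹' A) + ENNReal.ofReal S := by gcongr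
    · calc ℙ (Zbar n ⁻¹' A) ≤ ℙ (Z n ⁻¹' A) + ℙ E := coupling_bound hcpl' A
      _ ≤ ℙ (Z n ⁻¹' A) + ENNReal.ofReal S := by gcongr
  constructor
  · rw [TVdist]
    refine Real.iSup_le ?_ hS
    rintro ⟨A, hA⟩
    exact abs_toReal_sub_le (measure_ne_top _ _) (measure_ne_top _ _) hS
      (habs A hA).1 (habs A hA).2
  · rw [TVdist]
    refine Real.iSup_le ?_ (add_nonneg (hD n) hS)
    rintro ⟨A, hA⟩
    have hchitv := chi_tv (hD n) (hchi n) hA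
    have hsplit : ENNReal.ofReal (D n + S) = ENNReal.ofReal (D n) + ENNReal.ofReal S :=
      ENNReal.ofReal_add (hD n) hS
    refine abs_toReal_sub_le (measure_ne_top _ _) (measure_ne_top _ _) (add_nonneg (hD n) hS) ?_ ?_
    · calc p n A ≤ Measure.map (Zbar n) ℙ A + ENNReal.ofReal (D n) := hchitv.2
      _ ≤ (Measure.map (Z n) ℙ A + ENNReal.ofReal S) + ENNReal.ofReal (D n) := by
          gcongr
          exact (habs A hA).2
      _ = Measure.map (Z n) ℙ A + ENNReal.ofReal (D n + S) := by
          rw [hsplit]; ring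
    · calc Measure.map (Z n) ℙ A ≤ Measure.map (Zbar n) ℙ A + ENNReal.ofReal S := (habs A hA).1
      _ ≤ (p n A + ENNReal.ofReal (D n)) + ENNReal.ofReal S := by
          gcongr
          exact hchitv.1
      _ = p n A + ENNReal.ofReal (D n + S) := by
          rw [hsplit]; ring
end
end

section
/- Let p(x) ∝ e^{−V(x)} be a probability density on ℝ^d where V is C¹ and ∇V is L-Lipschitz. Then for any probability density q on ℝ^d such that q/p is C¹ and the integrals below are finite: ∫ ‖∇V(x)‖² q(x) dx ≤ ∫ ‖∇ ln(q(x)/p(x))‖² q(x) dx + 2·d·L. -/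
open MeasureTheory ProbabilityTheory Real
open scoped ENNReal NNReal RealInnerProductSpace

noncomputable section

variable {d : ℕ}

open InnerProductSpace intervalIntegral

lemma grad_inner' {d : ℕ} (f : Euc d → ℝ) (x v : Euc d) : ⟪gradient f x, v⟫ = fderiv ℝ f x v := by
  simp [gradient, ← InnerProductSpace.toDual_apply_apply]

lemma grad_coord' {d : ℕ} (f : Euc d → ℝ) (x : Euc d) (i : Fin d) :
    gradient f x i = fderiv ℝ f x (EuclideanSpace.single i 1) := by
  rw [← grad_inner']
  rw [real_inner_comm]
  simp only [EuclideanSpace.inner_single_left, EuclideanSpace.inner_single_right, map_one, one_mul,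
    mul_one, conj_trivial]

lemma coord_le_norm' {d : ℕ} (a : Euc d) (i : Fin d) : |a i| ≤ ‖a‖ := by
  have h := abs_real_inner_le_norm (EuclideanSpace.single i (1:ℝ)) a
  simpa [EuclideanSpace.inner_single_left, EuclideanSpace.norm_single] using h

lemma cont_coord' {d : ℕ} {α : Type*} [TopologicalSpace α] {F : α → Euc d}
    (hF : Continuous F) (i : Fin d) : Continuous fun x => F x i :=
  (EuclideanSpace.proj i).continuous.comp hF

lemma grad_continuous' {d : ℕ} {f : Euc d → ℝ} (hf : ContDiff ℝ 1 f) :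
    Continuous (fun x => gradient f x) :=
  (InnerProductSpace.toDual ℝ (Euc d)).symm.continuous.comp (hf.continuous_fderiv one_ne_zero)

lemma grad_measurable' {d : ℕ} (f : Euc d → ℝ) : Measurable (fun x => gradient f x) :=
  (InnerProductSpace.toDual ℝ (Euc d)).symm.continuous.measurable.comp (measurable_fderiv ℝ f)

section Helpers
variable {w v : Euc d → ℝ} {e : Euc d} {L : ℝ≥0}

lemma wshift (he : ‖e‖ = 1) (hw : LipschitzWith L w) (s s' : ℝ) (y : Euc d) :
    |w (y - s • e) - w (y - s' • e)| ≤ L * |s - s'| := by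
  have h2 : dist (y - s • e) (y - s' • e) = |s - s'| := by
    rw [dist_eq_norm]
    have : y - s • e - (y - s' • e) = (s' - s) • e := by
      rw [sub_smul]; abel
    rw [this]
    simp [norm_smul, he, Real.norm_eq_abs, abs_sub_comm]
  have := hw.dist_le_mul (y - s • e) (y - s' • e)
  rw [Real.dist_eq, h2] at this
  exact this

lemma shift_key_int (he : ‖e‖ = 1) (hw : LipschitzWith L w) (hvc : Continuous v)
    (hvi : Integrable v) (hwv : Integrable (fun x => w x * v x)) (s : ℝ) :
    Integrable (fun y => w (y - s • e) * v y) := by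
  have hwcont : Continuous w := hw.continuous
  refine (hwv.norm.add (hvi.norm.const_mul ((L : ℝ) * |s|))).mono'
    (((hwcont.comp (continuous_id.sub continuous_const)).mul hvc).aestronglyMeasurable) ?_
  refine Filter.Eventually.of_forall fun y => ?_
  have h1 : |w (y - s • e)| ≤ |w y| + L * |s| := by
    have h := wshift he hw s 0 y
    simp only [zero_smul, sub_zero] at h
    have h2 := abs_sub_abs_le_abs_sub (w (y - s • e)) (w y)
    linarith
  calc ‖w (y - s • e) * v y‖ = |w (y - s • e)| * |v y| := abs_mul _ _
    _ ≤ (|w y| + L * |s|) * |v y| := mul_le_mul_of_nonneg_right h1 (abs_nonneg _)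
    _ = |w y| * |v y| + L * |s| * |v y| := by ring
    _ = ‖w y * v y‖ + L * |s| * ‖v y‖ := by simp [Real.norm_eq_abs, abs_mul]

lemma shift_int (he : ‖e‖ = 1) (hw : LipschitzWith L w) (hvc : Continuous v)
    (hvi : Integrable v) (hwv : Integrable (fun x => w x * v x)) (s : ℝ) :
    Integrable (fun x => w x * v (x + s • e)) := by
  have h := shift_key_int he hw hvc hvi hwv s
  have heq : (fun x => w x * v (x + s • e)) =
      (fun y => w (y - s • e) * v y) ∘ (fun x => x + s • e) := by
    funext x; simp [Function.comp]
  rw [heq]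
  exact ((measurePreserving_add_right volume (s • e)).integrable_comp
    (((hw.continuous.comp (continuous_id.sub continuous_const)).mul hvc).aestronglyMeasurable)).2 h

lemma shift_eq' (w v : Euc d → ℝ) (e : Euc d) (s : ℝ) :
    ∫ x, w x * v (x + s • e) = ∫ y, w (y - s • e) * v y := by
  rw [← integral_add_right_eq_self (fun y => w (y - s • e) * v y) (s • e)]
  simp

lemma shift_diff_bound (he : ‖e‖ = 1) (hw : LipschitzWith L w) (hvc : Continuous v)
    (hvi : Integrable v) (hwv : Integrable (fun x => w x * v x)) (s s' : ℝ) :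
    |(∫ x, w x * v (x + s • e)) - ∫ x, w x * v (x + s' • e)| ≤
      L * |s - s'| * ∫ x, |v x| := by
  rw [shift_eq' w v e s, shift_eq' w v e s',
    ← integral_sub (shift_key_int he hw hvc hvi hwv s) (shift_key_int he hw hvc hvi hwv s')]
  have heq : ∀ y, (w (y - s • e) * v y - w (y - s' • e) * v y) =
      (w (y - s • e) - w (y - s' • e)) * v y := fun y => by ring
  simp_rw [heq]
  calc |∫ y, (w (y - s • e) - w (y - s' • e)) * v y|
      ≤ ∫ y, |w (y - s • e) - w (y - s' • e)| * |v y| := by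
        simpa [Real.norm_eq_abs, abs_mul] using
          norm_integral_le_integral_norm (fun y : Euc d => (w (y - s • e) - w (y - s' • e)) * v y)
    _ ≤ ∫ y, (L : ℝ) * |s - s'| * |v y| := by
        refine integral_mono_of_nonneg
          (Filter.Eventually.of_forall fun y => mul_nonneg (abs_nonneg _) (abs_nonneg _))
          (hvi.norm.const_mul _) (Filter.Eventually.of_forall fun y => ?_)
        exact mul_le_mul_of_nonneg_right (wshift he hw s s' y) (abs_nonneg _)
    _ = L * |s - s'| * ∫ x, |v x| := integral_const_mul _ _

end Helpers

lemma arith_aux (Lr Cr h0 : ℝ) (hL : 0 ≤ Lr) (hC : 0 ≤ Cr)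
    (hyp : ∀ t : ℝ, 0 < t → -(Lr * t) ≤ t * h0 + Lr * Cr * (t ^ 2 / 2)) :
    -Lr ≤ h0 := by
  by_contra hcon
  push_neg at hcon
  have hε0 : 0 < -Lr - h0 := by linarith
  set ε := -Lr - h0 with hε
  have hD : 0 < Lr * Cr + 1 := by positivity
  have ht0 : 0 < ε / (Lr * Cr + 1) := by positivity
  have hfin := hyp _ ht0
  have htdef : ε / (Lr * Cr + 1) * (Lr * Cr + 1) = ε := div_mul_cancel₀ ε (by positivity)
  have h2 : ε / (Lr * Cr + 1) * (Lr * Cr + 1) * (ε / (Lr * Cr + 1)) = ε * (ε / (Lr * Cr + 1)) := by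
    rw [htdef]
  nlinarith [hfin, hε0, ht0, h2, mul_pos ht0 hε0, sq_nonneg (ε / (Lr * Cr + 1))]

lemma core_ibp' {d : ℕ} (w u q : Euc d → ℝ) (e : Euc d) (he : ‖e‖ = 1) (L : ℝ≥0)
    (hw : LipschitzWith L w)
    (hderiv : ∀ (x : Euc d) (s : ℝ), HasDerivAt (fun s : ℝ => q (x + s • e)) (u (x + s • e)) s)
    (hucont : Continuous u) (hqcont : Continuous q)
    (hq0 : ∀ x, 0 ≤ q x) (hqint : Integrable q) (hq1 : ∫ x, q x = 1)
    (hwq : Integrable (fun x => w x * q x))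
    (hu : Integrable u)
    (hwu : Integrable (fun x => w x * u x)) :
    -(L : ℝ) ≤ ∫ x, w x * u x := by
  have hwcont : Continuous w := hw.continuous
  set C : ℝ := ∫ x, |u x| with hC
  have hC0 : 0 ≤ C := integral_nonneg fun x => abs_nonneg _
  set H : ℝ → ℝ := fun s => ∫ x, w x * u (x + s • e) with hHdef
  have H0 : H 0 = ∫ x, w x * u x := by simp [hHdef]
  have Hlip : ∀ s s' : ℝ, |H s - H s'| ≤ L * |s - s'| * C :=
    fun s s' => shift_diff_bound he hw hucont hu hwu s s'
  have Hcont : Continuous H := by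
    rw [Metric.continuous_iff]
    intro s ε hε
    refine ⟨ε / ((L : ℝ) * C + 1), by positivity, fun s' hs' => ?_⟩
    rw [Real.dist_eq] at hs' ⊢
    calc |H s' - H s| ≤ L * |s' - s| * C := Hlip s' s
      _ ≤ ((L : ℝ) * C + 1) * |s' - s| := by nlinarith [abs_nonneg (s' - s), L.coe_nonneg]
      _ < ((L : ℝ) * C + 1) * (ε / ((L : ℝ) * C + 1)) := by
          refine mul_lt_mul_of_pos_left hs' (by positivity)
      _ = ε := by field_simp
  -- FTC
  have ftc : ∀ (x : Euc d) (t : ℝ),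
      ∫ s in (0:ℝ)..t, u (x + s • e) = q (x + t • e) - q x := by
    intro x t
    have hd : ∀ s ∈ Set.uIcc (0:ℝ) t,
        HasDerivAt (fun s : ℝ => q (x + s • e)) (u (x + s • e)) s := fun s _ => hderiv x s
    have hInt : IntervalIntegrable (fun s => u (x + s • e)) volume 0 t :=
      (hucont.comp (by continuity)).intervalIntegrable _ _
    simpa using intervalIntegral.integral_eq_sub_of_hasDerivAt hd hInt
  -- Fubini
  have fub : ∀ t : ℝ, 0 < t →
      (∫ x, w x * (q (x + t • e) - q x)) = ∫ s in (0:ℝ)..t, H s := by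
    intro t ht
    have h1 : ∀ x, w x * (q (x + t • e) - q x) = ∫ s in (0:ℝ)..t, w x * u (x + s • e) := by
      intro x
      rw [intervalIntegral.integral_const_mul, ftc]
    simp_rw [h1]
    have h2 : ∀ x, (∫ s in (0:ℝ)..t, w x * u (x + s • e)) =
        ∫ s in Set.Ioc (0:ℝ) t, w x * u (x + s • e) := fun x =>
      intervalIntegral.integral_of_le ht.le
    simp_rw [h2]
    have hmeas : AEStronglyMeasurable (fun z : Euc d × ℝ => w z.1 * u (z.1 + z.2 • e))
        (volume.prod (volume.restrict (Set.Ioc (0:ℝ) t))) := by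
      apply Continuous.aestronglyMeasurable
      exact (hwcont.comp continuous_fst).mul
        (hucont.comp (continuous_fst.add (continuous_snd.smul continuous_const)))
    have habs : LipschitzWith L (fun x => |w x|) := by
      have h : LipschitzWith (1 * L) (fun x => ‖w x‖) := lipschitzWith_one_norm.comp hw
      simpa [Real.norm_eq_abs] using h
    have habsint : Integrable (fun x => |w x| * |u x|) := by
      have : (fun x => |w x| * |u x|) = fun x => |w x * u x| := by funext x; rw [abs_mul]
      rw [this]; exact hwu.abs
    set N : ℝ → ℝ := fun s => ∫ x, |w x| * |u (x + s • e)| with hNdef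
    have Nlip : ∀ s s' : ℝ, |N s - N s'| ≤ L * |s - s'| * C := by
      intro s s'
      have := shift_diff_bound (v := fun x => |u x|) he habs hucont.abs hu.abs habsint s s'
      simpa [hC] using this
    have Ncont : Continuous N := by
      rw [Metric.continuous_iff]
      intro s ε hε
      refine ⟨ε / ((L : ℝ) * C + 1), by positivity, fun s' hs' => ?_⟩
      rw [Real.dist_eq] at hs' ⊢
      calc |N s' - N s| ≤ L * |s' - s| * C := Nlip s' s
        _ ≤ ((L : ℝ) * C + 1) * |s' - s| := by nlinarith [abs_nonneg (s' - s), L.coe_nonneg]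
        _ < ((L : ℝ) * C + 1) * (ε / ((L : ℝ) * C + 1)) :=
            mul_lt_mul_of_pos_left hs' (by positivity)
        _ = ε := by field_simp
    have hprod : Integrable (Function.uncurry fun (x : Euc d) (s : ℝ) => w x * u (x + s • e))
        (volume.prod (volume.restrict (Set.Ioc (0:ℝ) t))) := by
      rw [show Function.uncurry (fun (x : Euc d) (s : ℝ) => w x * u (x + s • e)) =
        (fun z : Euc d × ℝ => w z.1 * u (z.1 + z.2 • e)) from rfl]
      rw [integrable_prod_iff' hmeas]
      constructor
      · exact Filter.Eventually.of_forall fun s => shift_int he hw hucont hu hwu s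
      · have hNbd : ∀ s : ℝ, s ∈ Set.Ioc (0:ℝ) t →
            ‖∫ x, ‖w x * u (x + s • e)‖‖ ≤ N 0 + (L : ℝ) * t * C := by
          intro s hs
          have hnn : 0 ≤ ∫ x, ‖w x * u (x + s • e)‖ := integral_nonneg fun x => norm_nonneg _
          rw [Real.norm_eq_abs, abs_of_nonneg hnn]
          have heq : (∫ x, ‖w x * u (x + s • e)‖) = N s := by
            simp only [hNdef, Real.norm_eq_abs, abs_mul]
          rw [heq]
          have := Nlip s 0
          have h1 : N s ≤ N 0 + (L : ℝ) * |s - 0| * C := by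
            have := abs_sub_abs_le_abs_sub (N s) (N 0)
            have h2 := Nlip s 0
            have h3 := le_abs_self (N s - N 0)
            linarith
          refine h1.trans ?_
          have hst : |s - 0| ≤ t := by
            rw [sub_zero, abs_of_pos hs.1]; exact hs.2
          have hmm := mul_le_mul_of_nonneg_right
            (mul_le_mul_of_nonneg_left hst L.coe_nonneg) hC0
          linarith
        refine Integrable.mono' (g := fun _ => N 0 + (L : ℝ) * t * C) ?_ ?_ ?_
        · rw [integrable_const_iff]
          right
          exact isFiniteMeasure_restrict.2 measure_Ioc_lt_top.ne
        · apply Continuous.aestronglyMeasurable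
          have : (fun s : ℝ => ∫ x, ‖w x * u (x + s • e)‖) = N := by
            funext s
            simp only [hNdef, Real.norm_eq_abs, abs_mul]
          rw [this]; exact Ncont
        · rw [ae_restrict_iff' measurableSet_Ioc]
          exact Filter.Eventually.of_forall hNbd
    calc (∫ x, ∫ s in Set.Ioc (0:ℝ) t, w x * u (x + s • e))
        = ∫ s in Set.Ioc (0:ℝ) t, ∫ x, w x * u (x + s • e) := integral_integral_swap hprod
      _ = ∫ s in (0:ℝ)..t, H s := (intervalIntegral.integral_of_le ht.le).symm
  -- lower bound for the left side
  have lb : ∀ t : ℝ, 0 < t → -((L : ℝ) * t) ≤ ∫ x, w x * (q (x + t • e) - q x) := by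
    intro t ht
    have hsub : (∫ x, w x * (q (x + t • e) - q x)) =
        (∫ x, w x * q (x + t • e)) - ∫ x, w x * q x := by
      have : ∀ x, w x * (q (x + t • e) - q x) = w x * q (x + t • e) - w x * q x :=
        fun x => by ring
      simp_rw [this]
      exact integral_sub (shift_int he hw hqcont hqint hwq t) hwq
    rw [hsub]
    have hdb := shift_diff_bound he hw hqcont hqint hwq t 0
    simp only [zero_smul, add_zero, sub_zero] at hdb
    have habsq : (∫ x, |q x|) = 1 := by
      rw [← hq1]; congr 1; funext x; exact abs_of_nonneg (hq0 x)
    rw [habsq, mul_one] at hdb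
    have h3 : |t| = t := abs_of_pos ht
    rw [h3] at hdb
    have h4 := neg_abs_le ((∫ x, w x * q (x + t • e)) - ∫ x, w x * q x)
    linarith
  -- combine
  have final : ∀ t : ℝ, 0 < t → -((L:ℝ) * t) ≤ t * H 0 + (L:ℝ) * C * (t^2/2) := by
    intro t ht
    have h1 := lb t ht
    rw [fub t ht] at h1
    have hHint : IntervalIntegrable H volume 0 t := Hcont.intervalIntegrable 0 t
    have hgint : IntervalIntegrable (fun s => H 0 + (L:ℝ) * C * s) volume 0 t :=
      (continuous_const.add (continuous_const.mul continuous_id)).intervalIntegrable 0 t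
    have hmono : (∫ s in (0:ℝ)..t, H s) ≤ ∫ s in (0:ℝ)..t, (H 0 + (L:ℝ)*C*s) := by
      apply intervalIntegral.integral_mono_on ht.le hHint hgint
      intro s hs
      have h5 := Hlip s 0
      have h6 := le_abs_self (H s - H 0)
      have h7 : |s - 0| = s := by rw [sub_zero]; exact abs_of_nonneg hs.1
      rw [h7] at h5
      have h8 : (L:ℝ) * s * C = (L:ℝ) * C * s := by ring
      linarith
    have hcalc : (∫ s in (0:ℝ)..t, (H 0 + (L:ℝ)*C*s)) = t * H 0 + (L:ℝ)*C*(t^2/2) := by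
      have h9 : (∫ s in (0:ℝ)..t, (H 0 + (L:ℝ)*C*s)) =
          (∫ _ in (0:ℝ)..t, H 0) + ∫ s in (0:ℝ)..t, (L:ℝ)*C*s := by
        apply intervalIntegral.integral_add intervalIntegrable_const
        exact (continuous_const.mul continuous_id').intervalIntegrable 0 t
      rw [h9, intervalIntegral.integral_const, intervalIntegral.integral_const_mul,
        integral_id]
      simp only [smul_eq_mul]
      ring
    rw [hcalc] at hmono
    linarith
  -- conclude
  rw [← H0]
  exact arith_aux L C (H 0) L.coe_nonneg hC0 final



lemma pexp_contDiff' (V : Euc d → ℝ) (hV : ContDiff ℝ 1 V) (Z : ℝ) :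
    ContDiff ℝ 1 (fun y => Real.exp (-V y) / Z) :=
  (hV.neg.exp).div_const Z

lemma pexp_hasFDerivAt' (V : Euc d → ℝ) (hV : ContDiff ℝ 1 V) (Z : ℝ) (y : Euc d) :
    HasFDerivAt (fun y => Real.exp (-V y) / Z)
      (-(Real.exp (-V y) / Z) • fderiv ℝ V y) y := by
  have h1 : HasFDerivAt (fun y => -V y) (-(fderiv ℝ V y)) y :=
    ((hV.differentiable one_ne_zero y).hasFDerivAt).neg
  have h2 := (Real.hasDerivAt_exp (-V y)).comp_hasFDerivAt y h1
  have h3 : HasFDerivAt (fun y => Real.exp (-V y) / Z)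
      (Z⁻¹ • (Real.exp (-V y) • -fderiv ℝ V y)) y := by
    simp only [div_eq_mul_inv]
    exact h2.mul_const Z⁻¹
  convert h3 using 1
  ext v
  simp only [ContinuousLinearMap.smul_apply, ContinuousLinearMap.neg_apply, smul_eq_mul]
  ring

lemma fderiv_identity' (V : Euc d → ℝ) (hV : ContDiff ℝ 1 V) {Z : ℝ} (hZ : 0 < Z)
    (q : Euc d → ℝ) (hq0 : ∀ x, 0 ≤ q x)
    (hC1 : ContDiff ℝ 1 fun y => q y / (Real.exp (-V y) / Z)) (x : Euc d) :
    fderiv ℝ q x =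
      q x • fderiv ℝ (fun y => Real.log (q y / (Real.exp (-V y) / Z))) x
        - q x • fderiv ℝ V x := by
  set p : Euc d → ℝ := fun y => Real.exp (-V y) / Z with hpdef
  have hp : ∀ y, 0 < p y := fun y => div_pos (Real.exp_pos _) hZ
  set r : Euc d → ℝ := fun y => q y / p y with hrdef
  rcases eq_or_lt_of_le (hq0 x) with hqx | hqx
  · -- q x = 0
    have hmin : IsLocalMin q x := Filter.Eventually.of_forall fun y => hqx ▸ hq0 y
    have hfz : fderiv ℝ q x = 0 := hmin.fderiv_eq_zero
    rw [hfz, ← hqx]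
    simp
  · -- q x > 0
    have hrx : 0 < r x := div_pos hqx (hp x)
    have hrfd : HasFDerivAt r (fderiv ℝ r x) x := (hC1.differentiable one_ne_zero x).hasFDerivAt
    have hlog : HasFDerivAt (fun y => Real.log (r y)) ((r x)⁻¹ • fderiv ℝ r x) x := by
      have := (Real.hasDerivAt_log hrx.ne').comp_hasFDerivAt x hrfd
      exact this
    have hqfd : HasFDerivAt q (r x • (-(p x) • fderiv ℝ V x) + p x • fderiv ℝ r x) x := by
      have heq : q = fun y => r y * p y := by
        funext y
        rw [hrdef]
        simp only
        rw [div_mul_cancel₀ _ (hp y).ne']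
      rw [heq]
      exact hrfd.mul (pexp_hasFDerivAt' V hV Z x)
    rw [hqfd.fderiv, hlog.fderiv]
    have hqrp : q x = r x * p x := by
      rw [hrdef]; simp only; rw [div_mul_cancel₀ _ (hp x).ne']
    ext v
    simp only [ContinuousLinearMap.add_apply, ContinuousLinearMap.coe_smul', Pi.smul_apply,
      ContinuousLinearMap.sub_apply, smul_eq_mul, ContinuousLinearMap.neg_apply]
    rw [hqrp]
    field_simp
    ring


set_option maxHeartbeats 2000000 in
/-- Change-of-measure bound for the squared gradient of the potential. -/
theorem grad_potential_change_of_measure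
    {d : ℕ} (V : Euc d → ℝ) (L : ℝ) (hV : ContDiff ℝ 1 V)
    (hLip : LipschitzWith (Real.toNNReal L) (gradient V))
    (hVint : Integrable fun x => Real.exp (-V x))
    (p : Euc d → ℝ) (hpdef : p = fun x => Real.exp (-V x) / ∫ y, Real.exp (-V y))
    (q : Euc d → ℝ) (hq : IsDensity q)
    (hC1 : ContDiff ℝ 1 fun x => q x / p x)
    (h1 : Integrable fun x => ‖gradient V x‖ ^ 2 * q x)
    (h2 : Integrable fun x => ‖gradient (fun y => Real.log (q y / p y)) x‖ ^ 2 * q x) :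
    (∫ x, ‖gradient V x‖ ^ 2 * q x) ≤
      (∫ x, ‖gradient (fun y => Real.log (q y / p y)) x‖ ^ 2 * q x) + 2 * d * L := by
  obtain ⟨hq0, hq1⟩ := hq
  have hqint : Integrable q := by
    by_contra hni
    rw [integral_undef hni] at hq1
    norm_num at hq1
  -- notation
  set G : Euc d → ℝ := fun y => Real.log (q y / p y) with hGdef
  -- nonneg of RHS integral
  have hJ0 : 0 ≤ ∫ x, ‖gradient G x‖ ^ 2 * q x :=
    integral_nonneg fun x => mul_nonneg (pow_nonneg (norm_nonneg _) 2) (hq0 x)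
  by_cases hL : 0 ≤ L
  case neg =>
    -- L < 0 : derive that gradient V is constant, then contradiction unless d = 0
    push_neg at hL
    have hLnn : Real.toNNReal L = 0 := by
      simp [Real.toNNReal_of_nonpos hL.le]
    rw [hLnn] at hLip
    have hconst : ∀ x y : Euc d, gradient V x = gradient V y := by
      intro x y
      have h := hLip x y
      simp only [ENNReal.coe_zero, zero_mul, nonpos_iff_eq_zero] at h
      exact edist_le_zero.mp (le_of_eq h)
    rcases Nat.eq_zero_or_pos d with hd | hd
    · -- d = 0
      subst hd
      have hz : ∀ x : Euc 0, gradient V x = 0 := fun x => Subsingleton.elim _ _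
      have hL0 : (∫ x, ‖gradient V x‖ ^ 2 * q x) = 0 := by
        have : (fun x : Euc 0 => ‖gradient V x‖ ^ 2 * q x) = fun _ => 0 := by
          funext x; rw [hz x]; simp
        rw [this, integral_zero]
      rw [hL0]
      simpa using hJ0
    · -- d ≥ 1 : contradiction
      exfalso
      set c : Euc d := gradient V 0 with hcdef
      have hfd : ∀ x, HasFDerivAt V (InnerProductSpace.toDual ℝ (Euc d) c) x := by
        intro x
        have h := (hV.differentiable one_ne_zero x).hasFDerivAt
        have he : InnerProductSpace.toDual ℝ (Euc d) c = fderiv ℝ V x := by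
          apply (InnerProductSpace.toDual ℝ (Euc d)).symm.injective
          simp only [LinearIsometryEquiv.symm_apply_apply]
          rw [hcdef, hconst 0 x]
          rfl
        rwa [he]
      have hline : ∀ x u : Euc d, V (x + u) = V x + ⟪c, u⟫ := by
        intro x u
        have hφ : ∀ s : ℝ, HasDerivAt (fun s : ℝ => V (x + s • u) - s * ⟪c, u⟫) 0 s := by
          intro s
          have hl : HasDerivAt (fun s : ℝ => x + s • u) u s := by
            simpa using ((hasDerivAt_id s).smul_const u).const_add x
          have h2' := (hfd (x + s • u)).comp_hasDerivAt s hl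
          have h3 : HasDerivAt (fun s : ℝ => s * ⟪c, u⟫) ⟪c, u⟫ s := by
            simpa using (hasDerivAt_id s).mul_const ⟪c, u⟫
          have h4 := h2'.sub h3
          have h5 : (InnerProductSpace.toDual ℝ (Euc d) c) u - ⟪c, u⟫ = 0 := by
            rw [InnerProductSpace.toDual_apply_apply, sub_self]
          rw [h5] at h4
          exact h4
        have hcon := is_const_of_deriv_eq_zero
          (fun s => (hφ s).differentiableAt) (fun s => (hφ s).deriv) 1 0
        simp only [one_smul, one_mul, zero_smul, add_zero, zero_mul, sub_zero] at hcon
        linarith [hcon]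
      have hZpos : 0 < ∫ y, Real.exp (-V y) := by
        rw [integral_pos_iff_support_of_nonneg (fun y => (Real.exp_pos _).le) hVint]
        have hs : Function.support (fun y : Euc d => Real.exp (-V y)) = Set.univ := by
          ext y; simp [(Real.exp_pos (-V y)).ne']
        rw [hs]
        exact isOpen_univ.measure_pos volume Set.univ_nonempty
      have hc0 : c = 0 := by
        have ha : (∫ x, Real.exp (-V (x + c))) = ∫ x, Real.exp (-V x) :=
          integral_add_right_eq_self (fun x => Real.exp (-V x)) c
        have hb : (∫ x, Real.exp (-V (x + c))) = Real.exp (-⟪c, c⟫) * ∫ x, Real.exp (-V x) := by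
          rw [← MeasureTheory.integral_const_mul]
          congr 1; funext x
          rw [hline x c, ← Real.exp_add]
          ring_nf
        have hcc : Real.exp (-⟪c, c⟫) * (∫ x, Real.exp (-V x)) = 1 * ∫ x, Real.exp (-V x) := by
          rw [← hb, ha, one_mul]
        have h5 := mul_right_cancel₀ hZpos.ne' hcc
        have h6 : -⟪c, c⟫ = 0 := by
          rwa [Real.exp_eq_one_iff] at h5
        have h7 : ⟪c, c⟫ = (0 : ℝ) := by linarith
        exact inner_self_eq_zero.mp h7
      have hVconst : ∀ x, V x = V 0 := by
        intro x
        have := hline 0 x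
        rw [hc0] at this
        simpa using this
      have hci : Integrable (fun _ : Euc d => Real.exp (-V 0)) := by
        apply hVint.congr
        exact Filter.Eventually.of_forall fun x => by simp only []; rw [hVconst x]
      rw [integrable_const_iff] at hci
      rcases hci with h | h
      · exact (Real.exp_pos _).ne' h
      · -- volume univ < ∞ : contradiction for d ≥ 1
        have : Nontrivial (Euc d) := by
          refine ⟨⟨0, EuclideanSpace.single ⟨0, hd⟩ 1, ?_⟩⟩
          intro hcontr
          have := congrArg (fun f : Euc d => f ⟨0, hd⟩) hcontr
          simp at this
        have h := h.measure_univ_lt_top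
        rw [measure_univ_of_isAddLeftInvariant (volume : Measure (Euc d))] at h
        exact lt_irrefl _ h
  case pos =>
    -- main case, 0 ≤ L
    set Z : ℝ := ∫ y, Real.exp (-V y) with hZdef
    have hZpos : 0 < Z := by
      rw [hZdef, integral_pos_iff_support_of_nonneg (fun y => (Real.exp_pos _).le) hVint]
      have hs : Function.support (fun y : Euc d => Real.exp (-V y)) = Set.univ := by
        ext y; simp [(Real.exp_pos (-V y)).ne']
      rw [hs]
      exact isOpen_univ.measure_pos volume Set.univ_nonempty
    have hp_eq : ∀ x, p x = Real.exp (-V x) / Z := fun x => by rw [hpdef]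
    have hppos : ∀ x, 0 < p x := fun x => (hp_eq x) ▸ div_pos (Real.exp_pos _) hZpos
    have hfun : (fun y => q y / (Real.exp (-V y) / Z)) = fun x => q x / p x := by
      funext y; rw [hp_eq y]
    have hGeq : (fun y => Real.log (q y / (Real.exp (-V y) / Z))) = G := by
      funext y; rw [hGdef]; simp only []; rw [hp_eq y]
    have hfdid : ∀ x, fderiv ℝ q x = q x • fderiv ℝ G x - q x • fderiv ℝ V x := by
      intro x
      have h := fderiv_identity' V hV hZpos q hq0 (by rw [hfun]; exact hC1) x
      rwa [hGeq] at h
    have hpC1 : ContDiff ℝ 1 p := by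
      have : p = fun x => Real.exp (-V x) / Z := funext hp_eq
      rw [this]
      exact (hV.neg.exp).div_const Z
    have hqC1 : ContDiff ℝ 1 q := by
      have hqeq : q = fun y => (q y / p y) * p y :=
        funext fun y => (div_mul_cancel₀ _ (hppos y).ne').symm
      rw [hqeq]
      exact hC1.mul hpC1
    -- gradient identity
    have hgrad : ∀ x, gradient q x = q x • gradient G x - q x • gradient V x := by
      intro x
      show (InnerProductSpace.toDual ℝ (Euc d)).symm (fderiv ℝ q x) = _
      rw [hfdid x, map_sub, _root_.map_smul, _root_.map_smul]
      rfl
    -- continuity / measurability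
    have hgVc : Continuous (fun x => gradient V x) := grad_continuous' hV
    have hgqc : Continuous (fun x => gradient q x) := grad_continuous' hqC1
    have hgm : Measurable (fun x => gradient G x) := grad_measurable' G
    have hqc : Continuous q := hqC1.continuous
    -- integrability of basic products
    have nq : Integrable (fun x => ‖gradient V x‖ * q x) := by
      refine (hqint.add h1).mono' ((hgVc.norm.mul hqc).aestronglyMeasurable) ?_
      refine Filter.Eventually.of_forall fun x => ?_
      have h3 : ‖gradient V x‖ ≤ 1 + ‖gradient V x‖ ^ 2 := by nlinarith [norm_nonneg (gradient V x), sq_nonneg (‖gradient V x‖ - 1)]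
      have h4 : ‖gradient V x‖ * q x ≤ (1 + ‖gradient V x‖ ^ 2) * q x := mul_le_mul_of_nonneg_right h3 (hq0 x)
      have h5 : 0 ≤ ‖gradient V x‖ * q x := mul_nonneg (norm_nonneg _) (hq0 x)
      rw [Real.norm_eq_abs, abs_of_nonneg h5]
      calc ‖gradient V x‖ * q x ≤ (1 + ‖gradient V x‖ ^ 2) * q x := h4
        _ = q x + ‖gradient V x‖ ^ 2 * q x := by ring
    have ng : Integrable (fun x => ‖gradient G x‖ * q x) := by
      refine (hqint.add h2).mono' (((grad_measurable' G).norm.mul hqc.measurable).aestronglyMeasurable) ?_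
      refine Filter.Eventually.of_forall fun x => ?_
      have h3 : ‖gradient G x‖ ≤ 1 + ‖gradient G x‖ ^ 2 := by nlinarith [norm_nonneg (gradient G x), sq_nonneg (‖gradient G x‖ - 1)]
      have h5 : 0 ≤ ‖gradient G x‖ * q x := mul_nonneg (norm_nonneg _) (hq0 x)
      rw [Real.norm_eq_abs, abs_of_nonneg h5]
      calc ‖gradient G x‖ * q x ≤ (1 + ‖gradient G x‖ ^ 2) * q x := mul_le_mul_of_nonneg_right h3 (hq0 x)
        _ = q x + ‖gradient G x‖ ^ 2 * q x := by ring
    have hinner : Integrable (fun x => ⟪gradient V x, gradient G x⟫ * q x) := by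
      refine (h1.add h2).mono'
        (((hgVc.measurable.inner (grad_measurable' G)).mul hqc.measurable).aestronglyMeasurable) ?_
      refine Filter.Eventually.of_forall fun x => ?_
      have h3 : |⟪gradient V x, gradient G x⟫| ≤ ‖gradient V x‖ * ‖gradient G x‖ := abs_real_inner_le_norm _ _
      have h4 : ‖gradient V x‖ * ‖gradient G x‖ ≤ ‖gradient V x‖ ^ 2 + ‖gradient G x‖ ^ 2 := by
        nlinarith [sq_nonneg (‖gradient V x‖ - ‖gradient G x‖), norm_nonneg (gradient V x), norm_nonneg (gradient G x)]
      rw [Real.norm_eq_abs, abs_mul, abs_of_nonneg (hq0 x)]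
      calc |⟪gradient V x, gradient G x⟫| * q x ≤ (‖gradient V x‖ ^ 2 + ‖gradient G x‖ ^ 2) * q x :=
            mul_le_mul_of_nonneg_right (h3.trans h4) (hq0 x)
        _ = ‖gradient V x‖ ^ 2 * q x + ‖gradient G x‖ ^ 2 * q x := by ring
    have hgq_norm : ∀ x, ‖gradient q x‖ ≤ ‖gradient V x‖ * q x + ‖gradient G x‖ * q x := by
      intro x
      rw [hgrad x]
      calc ‖q x • gradient G x - q x • gradient V x‖ ≤ ‖q x • gradient G x‖ + ‖q x • gradient V x‖ := norm_sub_le _ _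
        _ = ‖gradient V x‖ * q x + ‖gradient G x‖ * q x := by
            rw [norm_smul, norm_smul, Real.norm_eq_abs, abs_of_nonneg (hq0 x)]
            ring
    -- pointwise inner identity
    have hpt : ∀ x, ⟪gradient V x, gradient q x⟫ = ⟪gradient V x, gradient G x⟫ * q x - ‖gradient V x‖ ^ 2 * q x := by
      intro x
      rw [hgrad x, inner_sub_right, real_inner_smul_right, real_inner_smul_right,
        real_inner_self_eq_norm_sq]
      ring
    have hKint : Integrable (fun x => ⟪gradient V x, gradient q x⟫) := by
      have he : (fun x => ⟪gradient V x, gradient q x⟫) =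
          fun x => ⟪gradient V x, gradient G x⟫ * q x - ‖gradient V x‖ ^ 2 * q x := funext hpt
      rw [he]
      exact hinner.sub h1
    have I_eq : (∫ x, ‖gradient V x‖ ^ 2 * q x) =
        (∫ x, ⟪gradient V x, gradient G x⟫ * q x) - ∫ x, ⟪gradient V x, gradient q x⟫ := by
      rw [← integral_sub hinner hKint]
      congr 1; funext x; rw [hpt x]; ring
    have A_le : (∫ x, ⟪gradient V x, gradient G x⟫ * q x) ≤
        (1/2) * (∫ x, ‖gradient V x‖ ^ 2 * q x) + (1/2) * ∫ x, ‖gradient G x‖ ^ 2 * q x := by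
      have hb := integral_mono hinner ((h1.add h2).const_mul (1/2)) ?_
      · simp only [Pi.add_apply] at hb
        rw [MeasureTheory.integral_const_mul, integral_add h1 h2] at hb
        linarith
      · intro x
        simp only [Pi.add_apply]
        have h3 : |⟪gradient V x, gradient G x⟫| ≤ ‖gradient V x‖ * ‖gradient G x‖ := abs_real_inner_le_norm _ _
        have h4 := le_abs_self ⟪gradient V x, gradient G x⟫
        have h5 : ‖gradient V x‖ * ‖gradient G x‖ * q x ≤ (1/2) * (‖gradient V x‖ ^ 2 * q x + ‖gradient G x‖ ^ 2 * q x) := by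
          nlinarith [sq_nonneg (‖gradient V x‖ - ‖gradient G x‖), hq0 x, norm_nonneg (gradient V x), norm_nonneg (gradient G x)]
        have h6 : ⟪gradient V x, gradient G x⟫ * q x ≤ ‖gradient V x‖ * ‖gradient G x‖ * q x :=
          mul_le_mul_of_nonneg_right (h4.trans h3) (hq0 x)
        calc ⟪gradient V x, gradient G x⟫ * q x ≤ (1/2) * (‖gradient V x‖ ^ 2 * q x + ‖gradient G x‖ ^ 2 * q x) := h6.trans h5
          _ = (1/2) * (‖gradient V x‖ ^ 2 * q x + ‖gradient G x‖ ^ 2 * q x) := rfl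
    -- coordinatewise integration by parts
    have hcoord_int : ∀ i : Fin d, Integrable (fun x => gradient V x i * gradient q x i) := by
      intro i
      refine ((h1.const_mul 2).add h2).mono'
        (((cont_coord' hgVc i).mul (cont_coord' hgqc i)).aestronglyMeasurable) ?_
      refine Filter.Eventually.of_forall fun x => ?_
      rw [Real.norm_eq_abs, abs_mul]
      have ha := coord_le_norm' (gradient V x) i
      have hb := coord_le_norm' (gradient q x) i
      have hc := hgq_norm x
      have hd2 : |gradient V x i| * |gradient q x i| ≤ ‖gradient V x‖ * (‖gradient V x‖ * q x + ‖gradient G x‖ * q x) := by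
        have := mul_le_mul ha (hb.trans hc) (abs_nonneg _) (norm_nonneg _)
        exact this
      refine hd2.trans ?_
      simp only [Pi.add_apply]
      nlinarith [sq_nonneg (‖gradient V x‖ - ‖gradient G x‖), hq0 x, norm_nonneg (gradient V x), norm_nonneg (gradient G x)]
    have hsum : (fun x => ⟪gradient V x, gradient q x⟫) =
        fun x => ∑ i, gradient V x i * gradient q x i := by
      funext x
      rw [PiLp.inner_apply]
      exact Finset.sum_congr rfl fun i _ => by simp [RCLike.inner_apply, conj_trivial, mul_comm]
    have hKsum : (∫ x, ⟪gradient V x, gradient q x⟫) = ∑ i, ∫ x, gradient V x i * gradient q x i := by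
      rw [hsum]
      exact integral_finset_sum _ (fun i _ => hcoord_int i)
    have each_ge : ∀ i : Fin d, -L ≤ ∫ x, gradient V x i * gradient q x i := by
      intro i
      set e : Euc d := EuclideanSpace.single i (1:ℝ) with hedef
      have he : ‖e‖ = 1 := by rw [hedef]; simp [EuclideanSpace.norm_single]
      have hw : LipschitzWith (Real.toNNReal L) (fun x => gradient V x i) := by
        apply LipschitzWith.of_dist_le_mul
        intro x y
        have hd1 := hLip.dist_le_mul x y
        have hd2 : dist (gradient V x i) (gradient V y i) ≤ dist (gradient V x) (gradient V y) := by
          rw [Real.dist_eq, dist_eq_norm]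
          have hsub : gradient V x i - gradient V y i = (gradient V x - gradient V y) i := by
            simp
          rw [hsub]
          exact coord_le_norm' _ i
        linarith
      have hderiv : ∀ (x : Euc d) (s : ℝ),
          HasDerivAt (fun s : ℝ => q (x + s • e)) (gradient q (x + s • e) i) s := by
        intro x s
        have hl : HasDerivAt (fun s : ℝ => x + s • e) e s := by
          simpa using ((hasDerivAt_id s).smul_const e).const_add x
        have hfd := (hqC1.differentiable one_ne_zero (x + s • e)).hasFDerivAt
        have h := hfd.comp_hasDerivAt s hl
        have hcoord : gradient q (x + s • e) i = fderiv ℝ q (x + s • e) e :=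
          grad_coord' q _ i
        rw [hcoord]
        exact h
      have hucont : Continuous (fun x => gradient q x i) := cont_coord' hgqc i
      have hwq2 : Integrable (fun x => gradient V x i * q x) := by
        refine nq.mono' ((cont_coord' hgVc i).mul hqc).aestronglyMeasurable ?_
        refine Filter.Eventually.of_forall fun x => ?_
        rw [Real.norm_eq_abs, abs_mul, abs_of_nonneg (hq0 x)]
        exact mul_le_mul_of_nonneg_right (coord_le_norm' (gradient V x) i) (hq0 x)
      have hu2 : Integrable (fun x => gradient q x i) := by
        refine (nq.add ng).mono' (cont_coord' hgqc i).aestronglyMeasurable ?_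
        refine Filter.Eventually.of_forall fun x => ?_
        rw [Real.norm_eq_abs]
        refine (coord_le_norm' (gradient q x) i).trans ?_
        simpa using hgq_norm x
      have hcore := core_ibp' (fun x => gradient V x i) (fun x => gradient q x i) q e he
        (Real.toNNReal L) hw hderiv hucont hqc hq0 hqint hq1 hwq2 hu2 (hcoord_int i)
      rwa [Real.coe_toNNReal L hL] at hcore
    have K_ge : -((d:ℝ) * L) ≤ ∫ x, ⟪gradient V x, gradient q x⟫ := by
      rw [hKsum]
      calc -((d:ℝ) * L) = ∑ _i : Fin d, (-L) := by
            rw [Finset.sum_const, Finset.card_univ, Fintype.card_fin, nsmul_eq_mul]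
            ring
        _ ≤ ∑ i, ∫ x, gradient V x i * gradient q x i :=
            Finset.sum_le_sum fun i _ => each_ge i
    linarith [I_eq, A_le, K_ge]
end
end
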